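/- Let μ > 0, σ > 0, δ > 0, Δ = √(μ² + 2δσ²), and W_δ(x) = (2/Δ) e^{−μx/σ²} sinh(xΔ/σ²). Then the equation W_δ(b)/W_δ'(b) = μ/δ has the unique positive solution b* = (σ²/Δ) log((Δ + μ)/(Δ − μ)), and W_δ' attains its global minimum on [0,∞) at b*. -/

import Mathlib

open Real Set

lemma aux_deriv1 (μ σ Δ : ℝ) (hσ : σ ≠ 0) (hΔ : Δ ≠ 0) (x : ℝ) :
    HasDerivAt (fun x => (2 / Δ) * Real.exp (-(μ * x) / σ ^ 2) * Real.sinh (x * Δ / σ ^ 2))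
      ((2 / Δ) * Real.exp (-(μ * x) / σ ^ 2) *
        ((Δ * Real.cosh (x * Δ / σ ^ 2) - μ * Real.sinh (x * Δ / σ ^ 2)) / σ ^ 2)) x := by
  have h1 : HasDerivAt (fun x : ℝ => -(μ * x) / σ ^ 2) (-μ / σ ^ 2) x := by
    have := (((hasDerivAt_id x).const_mul μ).neg).div_const (σ ^ 2)
    simpa [mul_comm] using this
  have h2 := h1.exp
  have h3 : HasDerivAt (fun x : ℝ => x * Δ / σ ^ 2) (Δ / σ ^ 2) x := by
    have := ((hasDerivAt_id x).mul_const Δ).div_const (σ ^ 2)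
    simpa using this
  have h5 := (h2.const_mul (2 / Δ)).fun_mul h3.sinh
  exact h5.congr_deriv (by ring)

lemma aux_deriv2 (μ σ Δ : ℝ) (hσ : σ ≠ 0) (hΔ : Δ ≠ 0) (x : ℝ) :
    HasDerivAt (fun x => (2 / Δ) * Real.exp (-(μ * x) / σ ^ 2) *
        ((Δ * Real.cosh (x * Δ / σ ^ 2) - μ * Real.sinh (x * Δ / σ ^ 2)) / σ ^ 2))
      ((2 / (Δ * σ ^ 4)) * Real.exp (-(μ * x) / σ ^ 2) *
        ((μ ^ 2 + Δ ^ 2) * Real.sinh (x * Δ / σ ^ 2) - 2 * μ * Δ * Real.cosh (x * Δ / σ ^ 2))) x := by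
  have h1 : HasDerivAt (fun x : ℝ => -(μ * x) / σ ^ 2) (-μ / σ ^ 2) x := by
    have := (((hasDerivAt_id x).const_mul μ).neg).div_const (σ ^ 2)
    simpa [mul_comm] using this
  have h2 := h1.exp
  have h3 : HasDerivAt (fun x : ℝ => x * Δ / σ ^ 2) (Δ / σ ^ 2) x := by
    have := ((hasDerivAt_id x).mul_const Δ).div_const (σ ^ 2)
    simpa using this
  have h4 := ((h3.cosh.const_mul Δ).fun_sub (h3.sinh.const_mul μ)).div_const (σ ^ 2)
  have h5 := (h2.const_mul (2 / Δ)).fun_mul h4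
  exact h5.congr_deriv (by field_simp; ring)

set_option maxHeartbeats 1000000 in
/-- The optimal de Finetti dividend barrier for Brownian motion with positive drift. -/
theorem bm_optimal_barrier (μ σ δ : ℝ) (hμ : 0 < μ) (hσ : 0 < σ) (hδ : 0 < δ) :
    let Δ := Real.sqrt (μ ^ 2 + 2 * δ * σ ^ 2)
    let W : ℝ → ℝ := fun x => (2 / Δ) * Real.exp (-(μ * x) / σ ^ 2) * Real.sinh (x * Δ / σ ^ 2)
    let b := (σ ^ 2 / Δ) * Real.log ((Δ + μ) / (Δ - μ))
    0 < b ∧ W b / deriv W b = μ / δ ∧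
      (∀ b' : ℝ, 0 < b' → W b' / deriv W b' = μ / δ → b' = b) ∧
      IsMinOn (deriv W) (Set.Ici (0 : ℝ)) b := by
  intro Δ W b
  have hσ2 : (0:ℝ) < σ ^ 2 := by positivity
  have hσ0 : σ ≠ 0 := ne_of_gt hσ
  have hΔ2 : Δ ^ 2 = μ ^ 2 + 2 * δ * σ ^ 2 := Real.sq_sqrt (by positivity)
  have hΔpos : 0 < Δ := Real.sqrt_pos.2 (by positivity)
  have hΔ0 : Δ ≠ 0 := ne_of_gt hΔpos
  have hμΔ : μ < Δ := by nlinarith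
  clear_value Δ
  have hsub : (0:ℝ) < Δ - μ := by linarith
  have hRpos : 0 < (Δ + μ) / (Δ - μ) := by apply div_pos <;> linarith
  have hR1 : 1 < (Δ + μ) / (Δ - μ) := by
    rw [lt_div_iff₀ hsub]; linarith
  have hbpos : 0 < b := by
    have h : 0 < σ ^ 2 / Δ := by positivity
    exact mul_pos h (Real.log_pos hR1)
  have hcb : b * Δ / σ ^ 2 = Real.log ((Δ + μ) / (Δ - μ)) := by
    show (σ ^ 2 / Δ) * Real.log ((Δ + μ) / (Δ - μ)) * Δ / σ ^ 2 = _
    field_simp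
  have hE : Real.exp (b * Δ / σ ^ 2) = (Δ + μ) / (Δ - μ) := by
    rw [hcb, Real.exp_log hRpos]
  have hWx : ∀ x, W x = (2 / Δ) * Real.exp (-(μ * x) / σ ^ 2) * Real.sinh (x * Δ / σ ^ 2) :=
    fun _ => rfl
  set g : ℝ → ℝ := fun x => (2 / Δ) * Real.exp (-(μ * x) / σ ^ 2) *
      ((Δ * Real.cosh (x * Δ / σ ^ 2) - μ * Real.sinh (x * Δ / σ ^ 2)) / σ ^ 2) with hgdef
  set g2 : ℝ → ℝ := fun x => (2 / (Δ * σ ^ 4)) * Real.exp (-(μ * x) / σ ^ 2) *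
      ((μ ^ 2 + Δ ^ 2) * Real.sinh (x * Δ / σ ^ 2) - 2 * μ * Δ * Real.cosh (x * Δ / σ ^ 2))
      with hg2def
  have hgx : ∀ x, g x = (2 / Δ) * Real.exp (-(μ * x) / σ ^ 2) *
      ((Δ * Real.cosh (x * Δ / σ ^ 2) - μ * Real.sinh (x * Δ / σ ^ 2)) / σ ^ 2) :=
    fun _ => rfl
  have hgd : ∀ x, HasDerivAt g (g2 x) x := fun x => aux_deriv2 μ σ Δ hσ0 hΔ0 x
  have hderivW : deriv W = g := funext fun x => (aux_deriv1 μ σ Δ hσ0 hΔ0 x).deriv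
  have hderivg : deriv g = g2 := funext fun x => (hgd x).deriv
  clear_value W
  clear_value b
  have hgpos : ∀ x, 0 < g x := by
    intro x
    have h1 := Real.exp_pos (-(μ * x) / σ ^ 2)
    have h2 : 0 < Δ * Real.cosh (x * Δ / σ ^ 2) - μ * Real.sinh (x * Δ / σ ^ 2) := by
      rw [Real.cosh_eq, Real.sinh_eq]
      have e1 := Real.exp_pos (x * Δ / σ ^ 2)
      have e2 := Real.exp_pos (-(x * Δ / σ ^ 2))
      nlinarith
    have h3 : 0 < 2 / Δ := by positivity
    have h4 : 0 < (Δ * Real.cosh (x * Δ / σ ^ 2) - μ * Real.sinh (x * Δ / σ ^ 2)) / σ ^ 2 :=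
      div_pos h2 hσ2
    exact mul_pos (mul_pos h3 h1) h4
  have key : (μ ^ 2 + Δ ^ 2) * Real.sinh (b * Δ / σ ^ 2)
      = 2 * μ * Δ * Real.cosh (b * Δ / σ ^ 2) := by
    have h2 : Δ + μ ≠ 0 := by positivity
    rw [Real.sinh_eq, Real.cosh_eq, Real.exp_neg, hE]
    field_simp
    ring
  -- sign of the second factor of g2 left of b
  have hphi : ∀ x : ℝ, x ≤ b →
      (μ ^ 2 + Δ ^ 2) * Real.sinh (x * Δ / σ ^ 2)
        - 2 * μ * Δ * Real.cosh (x * Δ / σ ^ 2) ≤ 0 := by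
    intro x hx
    have hv : Real.exp (x * Δ / σ ^ 2) ≤ (Δ + μ) / (Δ - μ) := by
      rw [← hE]
      exact Real.exp_le_exp.2 (by gcongr)
    set v := Real.exp (x * Δ / σ ^ 2) with hvdef
    have hvpos : 0 < v := Real.exp_pos _
    have h2 : v * (Δ - μ) ≤ Δ + μ := (le_div_iff₀ hsub).1 hv
    have h3 : (Δ - μ) ^ 2 * v * v ≤ (Δ + μ) ^ 2 := by
      nlinarith [mul_le_mul h2 h2 (mul_nonneg hvpos.le hsub.le) (by linarith : (0:ℝ) ≤ Δ + μ)]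
    have h4 : (Δ - μ) ^ 2 * v ≤ (Δ + μ) ^ 2 * v⁻¹ := by
      rw [← div_eq_mul_inv, le_div_iff₀ hvpos]
      linarith [h3]
    rw [Real.sinh_eq, Real.cosh_eq, Real.exp_neg, ← hvdef]
    linarith [h4]
  have hphi' : ∀ x : ℝ, b ≤ x →
      0 ≤ (μ ^ 2 + Δ ^ 2) * Real.sinh (x * Δ / σ ^ 2)
        - 2 * μ * Δ * Real.cosh (x * Δ / σ ^ 2) := by
    intro x hx
    have hv : (Δ + μ) / (Δ - μ) ≤ Real.exp (x * Δ / σ ^ 2) := by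
      rw [← hE]
      exact Real.exp_le_exp.2 (by gcongr)
    set v := Real.exp (x * Δ / σ ^ 2) with hvdef
    have hvpos : 0 < v := Real.exp_pos _
    have h2 : Δ + μ ≤ v * (Δ - μ) := (div_le_iff₀ hsub).1 hv
    have h3 : (Δ + μ) ^ 2 ≤ (Δ - μ) ^ 2 * v * v := by
      nlinarith [mul_le_mul h2 h2 (by linarith : (0:ℝ) ≤ Δ + μ) (mul_nonneg hvpos.le hsub.le)]
    have h4 : (Δ + μ) ^ 2 * v⁻¹ ≤ (Δ - μ) ^ 2 * v := by
      rw [← div_eq_mul_inv, div_le_iff₀ hvpos]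
      linarith [h3]
    rw [Real.sinh_eq, Real.cosh_eq, Real.exp_neg, ← hvdef]
    linarith [h4]
  have hcontg : Continuous g := by
    have : Differentiable ℝ g := fun x => (hgd x).differentiableAt
    exact this.continuous
  have hanti : AntitoneOn g (Set.Icc 0 b) := by
    apply antitoneOn_of_deriv_nonpos (convex_Icc 0 b) hcontg.continuousOn
      (fun x _ => ((hgd x).differentiableAt).differentiableWithinAt)
    intro x hx
    rw [interior_Icc] at hx
    rw [hderivg, hg2def]
    have h1 : 0 < 2 / (Δ * σ ^ 4) := by positivity
    have h2 := Real.exp_pos (-(μ * x) / σ ^ 2)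
    have h3 := hphi x (le_of_lt hx.2)
    have := mul_nonpos_of_nonneg_of_nonpos (le_of_lt (mul_pos h1 h2)) h3
    simpa using this
  have hmono : MonotoneOn g (Set.Ici b) := by
    apply monotoneOn_of_deriv_nonneg (convex_Ici b) hcontg.continuousOn
      (fun x _ => ((hgd x).differentiableAt).differentiableWithinAt)
    intro x hx
    rw [interior_Ici] at hx
    rw [hderivg, hg2def]
    have h1 : 0 < 2 / (Δ * σ ^ 4) := by positivity
    have h2 := Real.exp_pos (-(μ * x) / σ ^ 2)
    have h3 := hphi' x (le_of_lt hx)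
    have := mul_nonneg (le_of_lt (mul_pos h1 h2)) h3
    simpa using this
  rw [hderivW]
  refine ⟨hbpos, ?_, ?_, ?_⟩
  · -- value equation
    rw [div_eq_div_iff (ne_of_gt (hgpos b)) (ne_of_gt hδ), hWx, hgx]
    have hP : Real.exp (-(μ * b) / σ ^ 2) ≠ 0 := (Real.exp_pos _).ne'
    field_simp
    rw [mul_comm Δ b]
    linear_combination (1 / 2 : ℝ) * key - (1 / 2 : ℝ) * Real.sinh (b * Δ / σ ^ 2) * hΔ2
  · -- uniqueness
    intro b' hb' heq
    rw [div_eq_div_iff (ne_of_gt (hgpos b')) (ne_of_gt hδ)] at heq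
    have hP : Real.exp (-(μ * b') / σ ^ 2) ≠ 0 := (Real.exp_pos _).ne'
    have h0 : Δ * (Real.exp (-(μ * b') / σ ^ 2) *
        ((μ ^ 2 + Δ ^ 2) * Real.sinh (b' * Δ / σ ^ 2)
          - 2 * μ * Δ * Real.cosh (b' * Δ / σ ^ 2))) = 0 := by
      rw [hWx, hgx] at heq
      field_simp at heq
      rw [mul_comm Δ b'] at heq
      linear_combination (2 * Δ * Real.exp (-(μ * b') / σ ^ 2)) * heq
        + (Δ * Real.exp (-(μ * b') / σ ^ 2) * Real.sinh (b' * Δ / σ ^ 2)) * hΔ2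
    have key' : (μ ^ 2 + Δ ^ 2) * Real.sinh (b' * Δ / σ ^ 2)
        = 2 * μ * Δ * Real.cosh (b' * Δ / σ ^ 2) := by
      rcases mul_eq_zero.1 h0 with h | h
      · exact absurd h hΔ0
      · rcases mul_eq_zero.1 h with h | h
        · exact absurd h hP
        · linarith [sub_eq_zero.1 h]
    set u := Real.exp (b' * Δ / σ ^ 2) with hudef
    have hupos : 0 < u := Real.exp_pos _
    have h1 : (Δ - μ) ^ 2 * u ^ 2 = (Δ + μ) ^ 2 := by
      rw [Real.sinh_eq, Real.cosh_eq, Real.exp_neg, ← hudef] at key'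
      have hu0 : u ≠ 0 := ne_of_gt hupos
      field_simp at key'
      linear_combination key'
    have h2 : (Δ - μ) * u = Δ + μ := by
      nlinarith [mul_pos hsub hupos, sq_nonneg ((Δ - μ) * u - (Δ + μ)),
        sq_nonneg ((Δ - μ) * u + (Δ + μ))]
    have h3 : u = (Δ + μ) / (Δ - μ) := by
      field_simp
      linarith [h2]
    have h4 : b' * Δ / σ ^ 2 = b * Δ / σ ^ 2 := by
      have := Real.exp_injective (by rw [← hudef, h3, hE] : Real.exp (b' * Δ / σ ^ 2) = Real.exp (b * Δ / σ ^ 2))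
      exact this
    field_simp at h4
    exact h4
  · -- min
    intro x hx
    simp only [Set.mem_setOf_eq]
    rcases le_total x b with h | h
    · exact hanti ⟨hx, h⟩ ⟨le_of_lt hbpos, le_refl b⟩ h
    · exact hmono (le_refl b) h h
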